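/- With the same setup (ellipse, unit circle parametrization), for every z inside the ellipse and m ≥ 1, (1/2π)∫₀^{2π} e^{-imθ}/(z - Ψ(e^{iθ})) h(θ)·(1/h(θ)) dθ = 0, i.e. the Cauchy operator applied to the density φ_{-m} = e^{-imθ}/h vanishes in the interior. -/

import Mathlib

open Complex

private lemma key_alg (a z : ℂ) (m : ℕ) (w : ℂ) (hw0 : w ≠ 0)
    (hquad : w^2 - z*w + a ≠ 0) :
    (w^m)⁻¹ / (z - (w + a * w⁻¹))
      = (w * I) * (-(I * w^m * (w^2 - z*w + a))⁻¹) := by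
  have h1 : z - (w + a*w⁻¹) = -(w^2 - z*w + a) * w⁻¹ := by field_simp; ring
  have hm : (w:ℂ)^m ≠ 0 := pow_ne_zero _ hw0
  have hIQ : I * w^m * (w^2 - z*w + a) ≠ 0 :=
    mul_ne_zero (mul_ne_zero I_ne_zero hm) hquad
  rw [h1, div_eq_iff (by exact mul_ne_zero (neg_ne_zero.mpr hquad) (inv_ne_zero hw0)),
    eq_comm, mul_assoc, mul_assoc]
  field_simp [hIQ]
  ring_nf
  have hq : -(w*z) + w^2 + a ≠ 0 := by convert hquad using 1; ring
  rw [show -(w * z * (-(w * z) + w ^ 2 + a)⁻¹) + w ^ 2 * (-(w * z) + w ^ 2 + a)⁻¹ + a * (-(w * z) + w ^ 2 + a)⁻¹ = (-(w*z) + w^2 + a) * (-(w*z) + w^2 + a)⁻¹ by ring]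
  exact mul_inv_cancel₀ hq

/-- The Cauchy-type operator applied to the density φ_{-m} = e^{-imθ}/h
vanishes inside the ellipse. -/
theorem cauchy_operator_negative_density_ellipse (a : ℂ) (ha : ‖a‖ < 1)
    (h : ℝ → ℝ) (hh : ∀ θ : ℝ, h θ = ‖(1 : ℂ) - a * Complex.exp (-2*θ*I)‖)
    (z : ℂ) (hz : ∀ w : ℂ, 1 ≤ ‖w‖ → w + a/w ≠ z) :
    ∀ m : ℕ, 1 ≤ m →
      (1/(2*(Real.pi : ℂ))) * ∫ θ in (0 : ℝ)..(2*Real.pi),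
          Complex.exp (-m*θ*I) /
            (z - (Complex.exp (θ*I) + a * Complex.exp (-θ*I)))
            * ((h θ : ℂ) * (h θ : ℂ)⁻¹)
        = 0 := by
  intro m hm
  -- the weight h θ * (h θ)⁻¹ is 1
  have hone : ∀ θ : ℝ, ((h θ : ℂ) * (h θ : ℂ)⁻¹) = 1 := by
    intro θ
    have hne : (1 : ℂ) - a * Complex.exp (-2*θ*I) ≠ 0 := by
      intro hEq
      have h1 : ‖a * Complex.exp (-2*θ*I)‖ = ‖a‖ := by
        rw [norm_mul]
        have : ‖Complex.exp (-2*θ*I)‖ = 1 := by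
          rw [Complex.norm_exp]
          simp
        rw [this, mul_one]
      have h2 : (1 : ℂ) = a * Complex.exp (-2*θ*I) := by
        have := sub_eq_zero.mp hEq; exact this
      rw [← h2] at h1
      simp at h1
      exact absurd h1.symm (ne_of_lt ha)
    have : h θ ≠ 0 := by rw [hh θ]; exact norm_ne_zero_iff.mpr hne
    rw [mul_inv_cancel₀ (by exact_mod_cast this)]
  -- the quadratic is nonzero outside the open unit disk
  have hquad : ∀ w : ℂ, 1 ≤ ‖w‖ → w^2 - z*w + a ≠ 0 := by
    intro w hw H
    have hw0 : w ≠ 0 := by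
      intro h0; rw [h0] at hw; simp at hw; linarith
    apply hz w hw
    field_simp
    linear_combination H
  -- the auxiliary holomorphic function
  set f : ℂ → ℂ := fun w => -(I * w^m * (w^2 - z*w + a))⁻¹ with hf
  have hdiff : ∀ w : ℂ, 1 ≤ ‖w‖ → DifferentiableAt ℂ f w := by
    intro w hw
    have hw0 : w ≠ 0 := by
      intro h0; rw [h0] at hw; simp at hw; linarith
    have hne : I * w^m * (w^2 - z*w + a) ≠ 0 :=
      mul_ne_zero (mul_ne_zero I_ne_zero (pow_ne_zero _ hw0)) (hquad w hw)
    have hg : DifferentiableAt ℂ (fun w : ℂ => I * w^m * (w^2 - z*w + a)) w := by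
      fun_prop
    exact (hg.inv hne).neg
  -- the integral equals the circle integral of f over the unit circle
  have hint : (∫ θ in (0 : ℝ)..(2*Real.pi),
          Complex.exp (-m*θ*I) /
            (z - (Complex.exp (θ*I) + a * Complex.exp (-θ*I)))
            * ((h θ : ℂ) * (h θ : ℂ)⁻¹))
      = ∮ w in C(0, 1), f w := by
    rw [circleIntegral]
    apply intervalIntegral.integral_congr
    intro θ _
    dsimp only
    have hw0 : Complex.exp ((θ:ℂ)*I) ≠ 0 := Complex.exp_ne_zero _
    have hwnorm : ‖Complex.exp ((θ:ℂ)*I)‖ = 1 := by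
      rw [Complex.norm_exp]; simp
    have hexp1 : Complex.exp (-(θ:ℂ)*I) = (Complex.exp ((θ:ℂ)*I))⁻¹ := by
      rw [← Complex.exp_neg]; congr 1; ring
    have hexpm : Complex.exp (-(m:ℂ)*(θ:ℂ)*I) = ((Complex.exp ((θ:ℂ)*I))^m)⁻¹ := by
      rw [← Complex.exp_nat_mul, ← Complex.exp_neg]; congr 1; ring
    rw [hone θ, mul_one, hexp1, hexpm, deriv_circleMap]
    have hcm : circleMap 0 1 θ = Complex.exp ((θ:ℂ)*I) := by simp [circleMap]
    rw [hcm, smul_eq_mul, hf]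
    exact key_alg a z m _ hw0 (hquad _ (le_of_eq hwnorm.symm))
  -- the circle integral is independent of the radius R ≥ 1
  have hconst : ∀ R : ℝ, 1 ≤ R → (∮ w in C(0, R), f w) = ∮ w in C(0, 1), f w := by
    intro R hR
    refine circleIntegral_eq_of_differentiable_on_annulus_off_countable one_pos hR
      Set.countable_empty ?_ ?_
    · intro w hw
      have h1 : 1 ≤ ‖w‖ := by
        have := hw.2
        simp only [Metric.mem_ball, dist_zero_right, not_lt] at this
        exact this
      exact (hdiff w h1).continuousAt.continuousWithinAt
    · intro w hw
      have h1 : 1 ≤ ‖w‖ := by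
        have := hw.1.2
        simp only [Metric.mem_closedBall, dist_zero_right, not_le] at this
        exact this.le
      exact hdiff w h1
  -- norm bound for large R
  have hbound : ∀ R : ℝ, ‖z‖ + ‖a‖ + 1 ≤ R →
      ‖∮ w in C(0, 1), f w‖ ≤ 2 * Real.pi / R := by
    intro R hR
    have hR1 : (1:ℝ) ≤ R := by
      have := norm_nonneg z; have := norm_nonneg a; linarith
    have hRpos : (0:ℝ) < R := by linarith
    have hsp : ∀ w ∈ Metric.sphere (0:ℂ) R, ‖f w‖ ≤ (R*R)⁻¹ := by
      intro w hw
      rw [mem_sphere_zero_iff_norm] at hw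
      have hQ : R ≤ ‖w^2 - z*w + a‖ := by
        have h2 : ‖(w^2 : ℂ)‖ - ‖z*w - a‖ ≤ ‖w^2 - (z*w - a)‖ := by
          exact norm_sub_norm_le _ _
        have h3 : ‖z*w - a‖ ≤ ‖z‖*R + ‖a‖ := by
          calc ‖z*w - a‖ ≤ ‖z*w‖ + ‖a‖ := norm_sub_le _ _
            _ = ‖z‖*R + ‖a‖ := by rw [norm_mul, hw]
        have h4 : ‖(w^2 : ℂ)‖ = R*R := by rw [norm_pow, hw]; ring
        have h5 : w^2 - (z*w - a) = w^2 - z*w + a := by ring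
        rw [h5, h4] at h2
        nlinarith [norm_nonneg a, norm_nonneg z]
      have hRm : R ≤ R^m := le_self_pow₀ hR1 (by omega)
      rw [hf]
      simp only [norm_neg, norm_inv, norm_mul, norm_I, one_mul, norm_pow, hw]
      apply inv_anti₀ (by positivity)
      calc R * R ≤ R^m * ‖w^2 - z*w + a‖ := by
            apply mul_le_mul hRm hQ (le_of_lt hRpos) (by positivity)
        _ = R^m * ‖w^2 - z*w + a‖ := rfl
    have hb := circleIntegral.norm_integral_le_of_norm_le_const (le_of_lt hRpos) hsp
    rw [hconst R hR1] at hb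
    have heq : 2 * Real.pi * R * (R*R)⁻¹ = 2 * Real.pi / R := by
      field_simp
    rw [heq] at hb
    exact hb
  -- conclude that the circle integral vanishes
  have hzero : (∮ w in C(0, 1), f w) = 0 := by
    have hlim : Filter.Tendsto (fun R : ℝ => 2*Real.pi / R) Filter.atTop (nhds 0) :=
      Filter.Tendsto.div_atTop tendsto_const_nhds Filter.tendsto_id
    have hev : ∀ᶠ R in Filter.atTop, ‖∮ w in C(0, 1), f w‖ ≤ 2*Real.pi / R :=
      Filter.eventually_atTop.mpr ⟨‖z‖+‖a‖+1, hbound⟩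
    have hle : ‖∮ w in C(0, 1), f w‖ ≤ 0 := ge_of_tendsto hlim hev
    simpa using norm_le_zero_iff.mp hle
  rw [hint, hzero, mul_zero]
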